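/- Let G = (V,E) be a graph with V = A ∪ B, A ∩ B = ∅, such that no non-trivial block of G contains a vertex of A. Let C be a connected component of the induced subgraph G[B], and let v ∈ V be a vertex adjacent in G to some vertex of C but with v ∉ V(C). Then v is adjacent in G to exactly one vertex of C. -/

import Mathlib

open SimpleGraph

/-- A subgraph has no cut vertex: deleting any vertex leaves it connected (if nonempty). -/
def NoCutVertex {V : Type*} {G : SimpleGraph V} (H : G.Subgraph) : Prop :=
  ∀ v ∈ H.verts, (H.deleteVerts {v}).verts.Nonempty → (H.deleteVerts {v}).Connected

/-- A block of G: a maximal connected subgraph without a cut vertex. -/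
def IsBlock {V : Type*} (G : SimpleGraph V) (H : G.Subgraph) : Prop :=
  H.Connected ∧ NoCutVertex H ∧
    ∀ H' : G.Subgraph, H ≤ H' → H'.Connected → NoCutVertex H' → H' = H

open Walk in
/-- Deleting a vertex from a cycle leaves a connected subgraph. -/
lemma cycle_deleteVert {V : Type*} {G : SimpleGraph V} {x : V} {c : G.Walk x x}
    (hc : c.IsCycle) : (c.toSubgraph.deleteVerts {x}).Connected := by
  cases c with
  | nil => exact absurd rfl hc.ne_nil
  | cons h p =>
    obtain ⟨hp, hedge⟩ := (Walk.cons_isCycle_iff p h).mp hc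
    have hq : p.reverse.IsPath := p.isPath_reverse_iff.mpr hp
    obtain ⟨z, hxz, r, hq_eq⟩ := Walk.exists_eq_cons_of_ne h.ne p.reverse
    rw [hq_eq, Walk.cons_isPath_iff] at hq
    obtain ⟨hr, hxr⟩ := hq
    have hmem : ∀ w, w ∈ p.support ↔ (w = x ∨ w ∈ r.support) := by
      intro w
      rw [← List.mem_reverse, ← support_reverse, hq_eq, support_cons, List.mem_cons]
    have hverts : ((Walk.cons h p).toSubgraph.deleteVerts {x}).verts
        = {w | w ∈ r.support} := by
      ext w
      simp only [Subgraph.deleteVerts_verts, mem_verts_toSubgraph, support_cons,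
        List.mem_cons, Set.mem_diff, Set.mem_singleton_iff, Set.mem_setOf_eq, hmem w]
      constructor
      · rintro ⟨(rfl | rfl | h1), h2⟩
        · exact absurd rfl h2
        · exact absurd rfl h2
        · exact h1
      · intro hw
        exact ⟨Or.inr (Or.inr hw), fun e => hxr (e ▸ hw)⟩
    have hrle : r.toSubgraph ≤ (Walk.cons h p).toSubgraph := by
      calc r.toSubgraph ≤ (Walk.cons hxz r).toSubgraph := le_sup_right
        _ = p.reverse.toSubgraph := by rw [hq_eq]
        _ = p.toSubgraph := p.toSubgraph_reverse
        _ ≤ (Walk.cons h p).toSubgraph := le_sup_right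
    have hle : r.toSubgraph ≤ (Walk.cons h p).toSubgraph.deleteVerts {x} := by
      constructor
      · rw [hverts, r.verts_toSubgraph]
      · intro a b hab
        have ha : a ∈ r.support := (mem_verts_toSubgraph r).mp hab.fst_mem
        have hb : b ∈ r.support := (mem_verts_toSubgraph r).mp hab.symm.fst_mem
        have hca := hrle.2 hab
        refine Subgraph.deleteVerts_adj.mpr ⟨hca.fst_mem, ?_, hca.symm.fst_mem, ?_, hca⟩
        · exact fun e => hxr ((Set.mem_singleton_iff.mp e) ▸ ha)
        · exact fun e => hxr ((Set.mem_singleton_iff.mp e) ▸ hb)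
    exact r.toSubgraph_connected.mono hle (by rw [hverts, r.verts_toSubgraph])

instance {V : Type*} {G : SimpleGraph V} [Finite V] : Finite G.Subgraph :=
  Finite.of_injective (fun H => (H.verts, H.Adj)) (fun H1 H2 h => by
    simp only [Prod.mk.injEq] at h
    exact SimpleGraph.Subgraph.ext h.1 h.2)

/-- If no non-trivial block of G contains a vertex of A and C is a connected component of
G[B], then any vertex outside C adjacent to C is adjacent to exactly one vertex of C. -/
theorem stmt_7 {V : Type*} [Fintype V] (G : SimpleGraph V) (A B : Set V)
    (hU : A ∪ B = Set.univ) (hdisj : Disjoint A B)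
    (hblock : ∀ Z : G.Subgraph, IsBlock G Z → 2 < Z.verts.ncard → ∀ a ∈ A, a ∉ Z.verts)
    (C : (G.induce B).ConnectedComponent) (v : V)
    (hv : v ∉ Subtype.val '' C.supp)
    (hadj : ∃ u ∈ Subtype.val '' C.supp, G.Adj v u) :
    ∃! u, u ∈ Subtype.val '' C.supp ∧ G.Adj v u := by
  classical
  obtain ⟨u, hu, hvu⟩ := hadj
  refine ⟨u, ⟨hu, hvu⟩, ?_⟩
  rintro u' ⟨hu', hvu'⟩
  by_contra hne
  obtain ⟨a, haC, rfl⟩ := hu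
  obtain ⟨b, hbC, rfl⟩ := hu'
  -- v is not in B
  have hvB : v ∉ B := by
    intro hvB
    apply hv
    refine ⟨⟨v, hvB⟩, ?_, rfl⟩
    rw [SimpleGraph.ConnectedComponent.mem_supp_iff]
    have hadj' : (G.induce B).Adj ⟨v, hvB⟩ a := by
      simpa using hvu
    exact (SimpleGraph.ConnectedComponent.sound hadj'.reachable).trans
      ((SimpleGraph.ConnectedComponent.mem_supp_iff C a).mp haC)
  have hvA : v ∈ A := by
    have : v ∈ A ∪ B := hU ▸ Set.mem_univ v
    exact this.resolve_right hvB
  -- a path from b to a inside the component C, mapped to G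
  have hreach : (G.induce B).Reachable b a := by
    apply SimpleGraph.ConnectedComponent.exact
    rw [(SimpleGraph.ConnectedComponent.mem_supp_iff C b).mp hbC,
      (SimpleGraph.ConnectedComponent.mem_supp_iff C a).mp haC]
  obtain ⟨p0⟩ := hreach
  set p1 : (G.induce B).Walk b a := (p0.toPath : (G.induce B).Path b a).val with hp1def
  have hp1 : p1.IsPath := p0.toPath.2
  have hsupp1 : ∀ x ∈ p1.support, x ∈ C.supp := by
    intro x hx
    rw [SimpleGraph.ConnectedComponent.mem_supp_iff]
    have : (G.induce B).Reachable b x := ⟨p1.takeUntil x hx⟩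
    exact (SimpleGraph.ConnectedComponent.sound this.symm).trans
      ((SimpleGraph.ConnectedComponent.mem_supp_iff C b).mp hbC)
  set f : G.induce B ↪g G := SimpleGraph.Embedding.induce B
  set p : G.Walk (b : V) (a : V) := p1.map f.toHom with hpdef
  have hp : p.IsPath := p1.map_isPath_of_injective f.injective hp1
  have hsupp : ∀ x ∈ p.support, x ∈ Subtype.val '' C.supp := by
    intro x hx
    replace hx : x ∈ (p1.map f.toHom).support := hx
    rw [Walk.support_map, List.mem_map] at hx
    obtain ⟨y, hy, rfl⟩ := hx
    exact ⟨y, hsupp1 y hy, rfl⟩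
  have hvp : v ∉ p.support := fun h => hv (hsupp v h)
  -- the cycle v - b - ... - a - v
  set W : G.Walk (b : V) v := p.concat hvu.symm with hWdef
  have hWpath : W.IsPath := by
    rw [← Walk.isPath_reverse_iff, hWdef, Walk.reverse_concat, Walk.cons_isPath_iff]
    refine ⟨p.isPath_reverse_iff.mpr hp, ?_⟩
    rw [Walk.support_reverse, List.mem_reverse]
    exact hvp
  have hvb : v ≠ (b : V) := fun e => hv (e ▸ ⟨b, hbC, rfl⟩)
  have hva : v ≠ (a : V) := fun e => hv (e ▸ ⟨a, haC, rfl⟩)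
  have hedge : s(v, (b : V)) ∉ W.edges := by
    rw [hWdef, Walk.edges_concat]
    intro hmem
    rw [List.concat_eq_append, List.mem_append, List.mem_singleton] at hmem
    rcases hmem with hmem | hmem
    · exact hvp (p.fst_mem_support_of_mem_edges hmem)
    · rw [Sym2.eq_iff] at hmem
      rcases hmem with ⟨rfl, _⟩ | ⟨_, hba⟩
      · exact hva rfl
      · exact hne (congrArg Subtype.val (Subtype.val_injective hba) ▸ hba ▸ rfl)
  set w : G.Walk v v := Walk.cons hvu' W with hwdef
  have hcyc : w.IsCycle := (Walk.cons_isCycle_iff W hvu').mpr ⟨hWpath, hedge⟩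
  -- the cycle's subgraph is connected with no cut vertex
  set H : G.Subgraph := w.toSubgraph with hHdef
  have hHconn : H.Connected := w.toSubgraph_connected
  have hHncv : NoCutVertex H := by
    intro x hx _
    have hx' : x ∈ w.support := (Walk.mem_verts_toSubgraph w).mp hx
    have := cycle_deleteVert (hcyc.rotate hx')
    rwa [Walk.toSubgraph_rotate] at this
  -- a maximal block above H
  obtain ⟨Z, hZS, hZmax⟩ := Set.Finite.exists_maximalFor id
    {Z : G.Subgraph | H ≤ Z ∧ Z.Connected ∧ NoCutVertex Z} (Set.toFinite _)
    ⟨H, le_rfl, hHconn, hHncv⟩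
  have hblockZ : IsBlock G Z :=
    ⟨hZS.2.1, hZS.2.2, fun H' hle hc hncv =>
      le_antisymm (hZmax ⟨hZS.1.trans hle, hc, hncv⟩ hle) hle⟩
  -- Z has more than 2 vertices
  have hvZ : v ∈ Z.verts := hZS.1.1 w.start_mem_verts_toSubgraph
  have hbsupp : (b : V) ∈ w.support := by
    rw [hwdef, Walk.support_cons]
    exact List.mem_cons_of_mem _ W.start_mem_support
  have hasupp : (a : V) ∈ w.support := by
    rw [hwdef, Walk.support_cons]
    refine List.mem_cons_of_mem _ ?_
    rw [hWdef, Walk.support_concat, List.mem_append]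
    exact Or.inl p.end_mem_support
  have haZ : (a : V) ∈ Z.verts := hZS.1.1 ((Walk.mem_verts_toSubgraph w).mpr hasupp)
  have hbZ : (b : V) ∈ Z.verts := hZS.1.1 ((Walk.mem_verts_toSubgraph w).mpr hbsupp)
  have hab : (a : V) ≠ (b : V) := fun e => hne (Subtype.val_injective e ▸ rfl)
  have hcard : 2 < Z.verts.ncard := by
    rw [Set.two_lt_ncard (Set.toFinite _)]
    exact ⟨v, hvZ, a, haZ, b, hbZ, hva, hvb, hab⟩
  exact hblock Z hblockZ hcard v hvA hvZ
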